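/- Let V be a finite-dimensional normed ℚ_p-vector space and let α_1, …, α_n be ℚ_p-linearly independent vectors. Then α_1, …, α_n form an orthogonal basis of their span if and only if |∑ a_i α_i| = max_i |a_i α_i| holds for every tuple (a_1,…,a_n) in which one coordinate equals 1 and the remaining coordinates lie in ℤ_p. -/

import Mathlib

theorem stmt3 {p : ℕ} [Fact p.Prime] {V : Type*} [AddCommGroup V] [Module ℚ_[p] V]
    [FiniteDimensional ℚ_[p] V]
    (N : V → ℝ)
    (hnonneg : ∀ v, 0 ≤ N v)
    (hzero : ∀ v, N v = 0 ↔ v = 0)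
    (hsmul : ∀ (x : ℚ_[p]) (v : V), N (x • v) = ‖x‖ * N v)
    (hna : ∀ v w, N (v + w) ≤ max (N v) (N w))
    {n : ℕ} (hn : 0 < n) (α : Fin n → V) (hindep : LinearIndependent ℚ_[p] α) :
    (∀ a : Fin n → ℚ_[p],
        N (∑ i, a i • α i) =
          Finset.univ.sup' ⟨⟨0, hn⟩, Finset.mem_univ _⟩ (fun i => N (a i • α i))) ↔
    (∀ (a : Fin n → ℚ_[p]) (i : Fin n), a i = 1 → (∀ j, j ≠ i → ‖a j‖ ≤ 1) →
        N (∑ i, a i • α i) =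
          Finset.univ.sup' ⟨⟨0, hn⟩, Finset.mem_univ _⟩ (fun i => N (a i • α i))) := by
  have hne : (Finset.univ : Finset (Fin n)).Nonempty := ⟨⟨0, hn⟩, Finset.mem_univ _⟩
  constructor
  · intro h a i _ _; exact h a
  · intro h a
    obtain ⟨i, -, hi⟩ := Finset.exists_mem_eq_sup' hne (fun j => ‖a j‖)
    have hle : ∀ j, ‖a j‖ ≤ ‖a i‖ := fun j => hi ▸ Finset.le_sup' (fun j => ‖a j‖) (Finset.mem_univ j)
    by_cases hai : a i = 0
    · have hall : ∀ j, a j = 0 := fun j => by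
        have := hle j; rw [hai, norm_zero] at this
        exact norm_le_zero_iff.mp this
      have hzero' : N 0 = 0 := (hzero 0).mpr rfl
      have : ∀ j : Fin n, N (a j • α j) = 0 := fun j => by rw [hall j, zero_smul]; exact hzero'
      rw [Finset.sum_congr rfl (fun j _ => by rw [hall j, zero_smul]), Finset.sum_const_zero,
        hzero']
      symm
      apply le_antisymm
      · exact Finset.sup'_le _ _ fun j _ => le_of_eq (this j)
      · exact (this ⟨0, hn⟩) ▸ Finset.le_sup' (fun j => N (a j • α j)) (Finset.mem_univ (⟨0, hn⟩ : Fin n))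
    · set b : Fin n → ℚ_[p] := fun j => (a i)⁻¹ * a j with hb
      have hbi : b i = 1 := by rw [hb]; exact inv_mul_cancel₀ hai
      have hbj : ∀ j, j ≠ i → ‖b j‖ ≤ 1 := by
        intro j _
        rw [hb]
        simp only [norm_mul, norm_inv]
        rw [inv_mul_le_one₀ (by simpa using hai : (0:ℝ) < ‖a i‖)]
        simpa using hle j
      have key := h b i hbi hbj
      have haj : ∀ j, a j = a i * b j := fun j => by rw [hb]; exact (mul_inv_cancel_left₀ hai (a j)).symm
      have hsum : (∑ j, a j • α j) = a i • ∑ j, b j • α j := by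
        rw [Finset.smul_sum]
        exact Finset.sum_congr rfl fun j _ => by rw [haj j, mul_smul]
      have hcomp : ∀ j : Fin n, N (a j • α j) = ‖a i‖ * N (b j • α j) := fun j => by
        rw [haj j, mul_smul, hsmul]
      calc N (∑ j, a j • α j) = ‖a i‖ * N (∑ j, b j • α j) := by rw [hsum, hsmul]
        _ = ‖a i‖ * Finset.univ.sup' hne (fun j => N (b j • α j)) := by rw [key]
        _ = Finset.univ.sup' hne (fun j => ‖a i‖ * N (b j • α j)) := by
            rw [Finset.comp_sup'_eq_sup'_comp hne (fun x => ‖a i‖ * x)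
              (fun x y => mul_max_of_nonneg x y (norm_nonneg _))]
            rfl
        _ = Finset.univ.sup' hne (fun j => N (a j • α j)) :=
            Finset.sup'_congr hne rfl fun j _ => (hcomp j).symm
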